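/- arXiv:2510.03923 — 2 statements merged into one kernel-verified Lean document; each statement's English description precedes it below -/
import Mathlib

section
/- Let W : I² → ℝ be (A₁,α)-Hölder with α ∈ (0,1], and for n ∈ ℕ let Wₙ be the sampled step kernel Wₙ(u,v) = W(u_i, u_j) for (u,v) ∈ I_i × I_j. Then ‖W − Wₙ‖²_{L²(I²)} ≤ A₁² · (2^{2α+2} − 2) / ((2α+1)(2α+2)) · n^{−2α}. -/
open MeasureTheory Filter Set
open scoped ENNReal NNReal

noncomputable section

/-- Lebesgue measure restricted to the unit interval `I = [0,1]`. -/
def μI : Measure ℝ := volume.restrict (Set.Icc (0:ℝ) 1)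

/-- Lebesgue measure restricted to the unit square `I² = [0,1]²`. -/
def μI2 : Measure (ℝ × ℝ) := volume.restrict ((Set.Icc (0:ℝ) 1) ×ˢ (Set.Icc (0:ℝ) 1))

/-- The graphon integral operator `(T_W x)(v) = ∫_I W(u,v) x(u) du`. -/
def graphonOp (W : ℝ → ℝ → ℝ) (x : ℝ → ℝ) : ℝ → ℝ :=
  fun v => ∫ u in Set.Icc (0:ℝ) 1, W u v * x u

/-- `k`-fold composition `T_W^k` (identity for `k = 0`). -/
def graphonIter (W : ℝ → ℝ → ℝ) (k : ℕ) (x : ℝ → ℝ) : ℝ → ℝ :=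
  (graphonOp W)^[k] x

/-- `ρ` is normalized Lipschitz: `|ρ x − ρ y| ≤ |x − y|` and `ρ 0 = 0`. -/
def NormalizedLipschitz (ρ : ℝ → ℝ) : Prop :=
  (∀ x y : ℝ, |ρ x - ρ y| ≤ |x - y|) ∧ ρ 0 = 0

/-- One layer of a graphon neural network. -/
def gnnLayer (F K : ℕ) (W : ℝ → ℝ → ℝ) (ρ : ℝ → ℝ)
    (h : Fin F → Fin F → Fin K → ℝ) (X : Fin F → ℝ → ℝ) : Fin F → ℝ → ℝ :=
  fun f u => ρ (∑ g : Fin F, ∑ k : Fin K, h f g k * graphonIter W (k : ℕ) (X g) u)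

/-- The `L`-layer graphon neural network `Φ(W; X; h)`. -/
def gnn (F K L : ℕ) (W : ℝ → ℝ → ℝ) (ρ : ℝ → ℝ)
    (h : Fin L → Fin F → Fin F → Fin K → ℝ) (X : Fin F → ℝ → ℝ) : Fin F → ℝ → ℝ :=
  (List.ofFn h).foldl (fun Y hl => gnnLayer F K W ρ hl Y) X

/-- The mixed norm `‖X‖_{L^p(I;ℝ^F)} = (∑_f ‖X_f‖_{L^p(I)}²)^{1/2}`. -/
def vecLpNorm (F : ℕ) (p : ℝ≥0∞) (X : Fin F → ℝ → ℝ) : ℝ :=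
  Real.sqrt (∑ f : Fin F, ((eLpNorm (X f) p μI).toReal) ^ 2)

/-- `X : ℝ → L^∞(I;ℝ^F)` is, on `[0,T]`, a continuously differentiable solution of the
Graphon-NDE `dX/dt(t) = Φ(W; X(t); H(t))`, `X(0) = Z`, in the Banach space `L^∞(I;ℝ^F)`. -/
def IsGNDESolution (F K L : ℕ) (T : ℝ) (W : ℝ → ℝ → ℝ) (ρ : ℝ → ℝ)
    (H : ℝ → Fin L → Fin F → Fin F → Fin K → ℝ) (Z : Fin F → ℝ → ℝ)
    (X : ℝ → Fin F → Lp ℝ ⊤ μI) : Prop :=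
  (∀ f, (X 0 f : ℝ → ℝ) =ᵐ[μI] Z f) ∧
  ∃ X' : ℝ → Fin F → Lp ℝ ⊤ μI,
    ContinuousOn X' (Set.Icc 0 T) ∧
    ∀ t ∈ Set.Icc (0:ℝ) T,
      HasDerivWithinAt X (X' t) (Set.Icc 0 T) t ∧
      ∀ f, (X' t f : ℝ → ℝ) =ᵐ[μI]
        gnn F K L W ρ (H t) (fun g => (X t g : ℝ → ℝ)) f

/-- Operator norm (from `L²(I)` to `L²(I)`) of the difference `T_W − T_{W'}`. -/
def graphonOpNormSub (W W' : ℝ → ℝ → ℝ) : ℝ :=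
  ⨆ x : {x : ℝ → ℝ // MemLp x 2 μI ∧ eLpNorm x 2 μI ≤ 1},
    (eLpNorm (fun v => graphonOp W x v - graphonOp W' x v) 2 μI).toReal

/-- Left endpoint `u_i = (i−1)/n` of the cell `I_i` containing `u`. -/
def stepPt (n : ℕ) (u : ℝ) : ℝ := (⌊(n : ℝ) * u⌋ : ℝ) / n

/-- Sampled step kernel: `Wₙ(u,v) = W(u_i,u_j)` for `(u,v) ∈ I_i × I_j`. -/
def sampKernel (W : ℝ → ℝ → ℝ) (n : ℕ) : ℝ → ℝ → ℝ :=
  fun u v => W (stepPt n u) (stepPt n v)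

/-- Sampled step datum: `Zₙ(u) = Z(u_i)` for `u ∈ I_i`. -/
def sampDatum (F : ℕ) (Z : Fin F → ℝ → ℝ) (n : ℕ) : Fin F → ℝ → ℝ :=
  fun f u => Z f (stepPt n u)

/-- Support `W⁺ = {(u,v) ∈ I² : W(u,v) = 1}`. -/
def supportSet (W : ℝ → ℝ → ℝ) : Set (ℝ × ℝ) :=
  {p : ℝ × ℝ | p.1 ∈ Set.Icc (0:ℝ) 1 ∧ p.2 ∈ Set.Icc (0:ℝ) 1 ∧ W p.1 p.2 = 1}

/-- The cell `I_i = [u_i, u_i + 1/n)` containing `u`. -/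
def cell (n : ℕ) (u : ℝ) : Set ℝ := Set.Ico (stepPt n u) (stepPt n u + 1 / n)

open scoped Classical in
/-- Cell-intersection step kernel: `Wₙ = 1` on `I_i × I_j` iff `(I_i × I_j) ∩ W⁺ ≠ ∅`. -/
def interKernel (W : ℝ → ℝ → ℝ) (n : ℕ) : ℝ → ℝ → ℝ :=
  fun u v => if ((cell n u ×ˢ cell n v) ∩ supportSet W).Nonempty then 1 else 0

/-- Cell-average step datum: `Zₙ(u) = n ∫_{I_i} Z(v) dv` for `u ∈ I_i`. -/
def cellAvg (F : ℕ) (Z : Fin F → ℝ → ℝ) (n : ℕ) : Fin F → ℝ → ℝ :=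
  fun f u => (n : ℝ) * ∫ v in cell n u, Z f v

/-- Number of closed `δ`-mesh squares `[iδ,(i+1)δ] × [jδ,(j+1)δ]`, `i,j ∈ ℤ`, meeting `Ω`. -/
def meshCount (δ : ℝ) (Ω : Set (ℝ × ℝ)) : ℕ :=
  Set.ncard {p : ℤ × ℤ |
    ((Set.Icc ((p.1 : ℝ) * δ) (((p.1 : ℝ) + 1) * δ) ×ˢ
      Set.Icc ((p.2 : ℝ) * δ) (((p.2 : ℝ) + 1) * δ)) ∩ Ω).Nonempty}

/-- Upper box-counting dimension `limsup_{δ→0⁺} log N_δ(Ω) / (−log δ)`. -/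
def upperBoxDim (Ω : Set (ℝ × ℝ)) : ℝ :=
  Filter.limsup (fun δ : ℝ => Real.log (meshCount δ Ω) / (-Real.log δ))
    (nhdsWithin 0 (Set.Ioi 0))

end
open intervalIntegral in
private lemma cell_integral (β h : ℝ) (hβ : 0 < β) (hh : 0 ≤ h) (a b : ℝ) :
    ∫ q : ℝ × ℝ in Set.Ico a (a+h) ×ˢ Set.Ico b (b+h), ((q.1 - a) + (q.2 - b)) ^ β
      = h^(β+2) * ((2:ℝ)^(β+2) - 2) / ((β+1)*(β+2)) := by
  have hcont : Continuous fun q : ℝ × ℝ => ((q.1 - a) + (q.2 - b)) ^ β :=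
    (Real.continuous_rpow_const hβ.le).comp (by continuity)
  have hint : IntegrableOn (fun q : ℝ × ℝ => ((q.1 - a) + (q.2 - b)) ^ β)
      (Set.Ico a (a+h) ×ˢ Set.Ico b (b+h)) (volume.prod volume) := by
    rw [← Measure.volume_eq_prod]
    exact (hcont.continuousOn.integrableOn_compact ((isCompact_Icc).prod isCompact_Icc)).mono_set
      (Set.prod_mono Set.Ico_subset_Icc_self Set.Ico_subset_Icc_self)
  rw [Measure.volume_eq_prod, setIntegral_prod _ hint]
  have inner : ∀ u ∈ Set.Ico a (a+h),
      (∫ v in Set.Ico b (b+h), ((u - a) + (v - b)) ^ β)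
        = ((u - a + h)^(β+1) - (u - a)^(β+1)) / (β+1) := by
    intro u hu
    have hu0 : 0 ≤ u - a := by simp [sub_nonneg, hu.1]
    rw [MeasureTheory.integral_Ico_eq_integral_Ioo, ← MeasureTheory.integral_Ioc_eq_integral_Ioo,
        ← intervalIntegral.integral_of_le (by linarith)]
    have : (∫ v in b..(b+h), ((u - a) + (v - b)) ^ β)
        = ∫ v in b..(b+h), (fun x : ℝ => x ^ β) (v + (u - a - b)) := by
      congr 1; ext v; ring_nf
    rw [this, intervalIntegral.integral_comp_add_right (fun x : ℝ => x ^ β) (u - a - b)]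
    have e1 : b + (u - a - b) = u - a := by ring
    have e2 : b + h + (u - a - b) = u - a + h := by ring
    rw [e1, e2, integral_rpow (Or.inl (by linarith))]
  rw [MeasureTheory.setIntegral_congr_fun measurableSet_Ico inner]
  have c1 : Continuous fun x : ℝ => x ^ (β+1) := Real.continuous_rpow_const (by linarith)
  have i1 : IntervalIntegrable (fun u : ℝ => (u - a + h) ^ (β+1)) volume a (a+h) :=
    (c1.comp (by continuity)).intervalIntegrable _ _
  have i2 : IntervalIntegrable (fun u : ℝ => (u - a) ^ (β+1)) volume a (a+h) :=
    (c1.comp (by continuity)).intervalIntegrable _ _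
  rw [MeasureTheory.integral_Ico_eq_integral_Ioo, ← MeasureTheory.integral_Ioc_eq_integral_Ioo,
    ← intervalIntegral.integral_of_le (by linarith)]
  rw [intervalIntegral.integral_div, intervalIntegral.integral_sub i1 i2]
  have e1 : (∫ u in a..(a+h), (u - a + h) ^ (β+1))
      = ((2*h) ^ (β+2) - h ^ (β+2)) / (β+2) := by
    have : (∫ u in a..(a+h), (u - a + h) ^ (β+1))
        = ∫ u in a..(a+h), (fun x : ℝ => x ^ (β+1)) (u + (h - a)) := by
      congr 1; ext u; ring_nf
    rw [this, intervalIntegral.integral_comp_add_right (fun x : ℝ => x ^ (β+1)) (h - a)]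
    have ea : a + (h - a) = h := by ring
    have eb : a + h + (h - a) = 2*h := by ring
    rw [ea, eb, integral_rpow (Or.inl (by linarith))]
    ring_nf
  have e2 : (∫ u in a..(a+h), (u - a) ^ (β+1)) = h ^ (β+2) / (β+2) := by
    simp only [sub_eq_add_neg]
    rw [intervalIntegral.integral_comp_add_right (fun x : ℝ => x ^ (β+1)) (-a)]
    have ea : a + -a = 0 := by ring
    have eb : a + h + -a = h := by ring
    rw [ea, eb, integral_rpow (Or.inl (by linarith)), Real.zero_rpow (by linarith)]
    ring_nf
  rw [e1, e2, Real.mul_rpow (by norm_num) hh]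
  have hb1 : β + 1 ≠ 0 := by linarith
  have hb2 : β + 2 ≠ 0 := by linarith
  field_simp
  ring

/-- **L² error of the sampled step kernel for Hölder graphons.**
If `W` is `(A₁,α)`-Hölder on `I²` then
`‖W − Wₙ‖²_{L²(I²)} ≤ A₁² (2^{2α+2} − 2)/((2α+1)(2α+2)) · n^{−2α}`. -/
theorem sampKernel_L2_error
    (A₁ α : ℝ) (hα0 : 0 < α) (hα1 : α ≤ 1)
    (W : ℝ → ℝ → ℝ)
    (hWHolder : ∀ u₁ ∈ Set.Icc (0:ℝ) 1, ∀ u₂ ∈ Set.Icc (0:ℝ) 1,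
      ∀ v₁ ∈ Set.Icc (0:ℝ) 1, ∀ v₂ ∈ Set.Icc (0:ℝ) 1,
        |W u₂ v₂ - W u₁ v₁| ≤ A₁ * (|u₂ - u₁| + |v₂ - v₁|) ^ α)
    (n : ℕ) (hn : 0 < n) :
    ((eLpNorm (fun q : ℝ × ℝ => W q.1 q.2 - sampKernel W n q.1 q.2) 2 μI2).toReal) ^ 2
      ≤ A₁ ^ 2 * (((2:ℝ) ^ (2 * α + 2) - 2) / ((2 * α + 1) * (2 * α + 2)))
          * (n : ℝ) ^ (-(2 * α)) := by
  have hn' : (0:ℝ) < n := by exact_mod_cast hn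
  set β : ℝ := 2*α with hβdef
  have hβ : 0 < β := by positivity
  set h : ℝ := 1/n with hhdef
  have hh : 0 < h := by positivity
  -- A₁ nonneg
  have hA₁ : 0 ≤ A₁ := by
    have h01 : (0:ℝ) ∈ Set.Icc (0:ℝ) 1 := by norm_num
    have h11 : (1:ℝ) ∈ Set.Icc (0:ℝ) 1 := by norm_num
    have hW0 := hWHolder 0 h01 1 h11 0 h01 0 h01
    simp [Real.one_rpow] at hW0
    linarith [abs_nonneg (W 1 0 - W 0 0)]
  set RHS : ℝ := A₁ ^ 2 * (((2:ℝ) ^ (2 * α + 2) - 2) / ((2 * α + 1) * (2 * α + 2)))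
          * (n : ℝ) ^ (-(2 * α)) with hRHSdef
  have h2le : (2:ℝ) ≤ 2 ^ (2*α+2) := by
    calc (2:ℝ) = 2^(1:ℝ) := (Real.rpow_one 2).symm
    _ ≤ 2^(2*α+2) := Real.rpow_le_rpow_of_exponent_le (by norm_num) (by linarith)
  have hRHS : 0 ≤ RHS := by
    apply mul_nonneg (mul_nonneg (sq_nonneg _) (div_nonneg (by linarith) (by positivity)))
    exact (Real.rpow_pos_of_pos hn' _).le
  -- cells
  set av : ℕ → ℝ := fun i => (i:ℝ)/n with havdef
  have havh : ∀ i : ℕ, av i + h = ((i:ℝ)+1)/n := by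
    intro i; rw [havdef, hhdef]; ring
  set cellS : ℕ × ℕ → Set (ℝ × ℝ) :=
    fun p => Set.Ico (av p.1) (av p.1 + h) ×ˢ Set.Ico (av p.2) (av p.2 + h) with hcelldef
  have hfloor : ∀ i : ℕ, ∀ u ∈ Set.Ico (av i) (av i + h), ⌊(n:ℝ) * u⌋ = (i:ℤ) := by
    intro i u hu
    have h1 : (i:ℝ) ≤ (n:ℝ) * u := by
      rw [havdef] at hu
      have := hu.1
      rw [div_le_iff₀ hn'] at this; linarith [this]
    have h2 : (n:ℝ) * u < (i:ℝ) + 1 := by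
      have := hu.2
      rw [havh i, lt_div_iff₀ hn'] at this; linarith [this]
    rw [Int.floor_eq_iff]; constructor <;> push_cast <;> linarith
  have hstep : ∀ i : ℕ, ∀ u ∈ Set.Ico (av i) (av i + h), stepPt n u = av i := by
    intro i u hu
    rw [stepPt, hfloor i u hu, havdef]; norm_num
  -- value of the per-cell bound
  set V : ℝ := A₁^2 * (h^(β+2) * ((2:ℝ)^(β+2) - 2) / ((β+1)*(β+2))) with hVdef
  -- per-cell bound
  have cellbound : ∀ p : ℕ × ℕ, p.1 < n → p.2 < n →
      (∫⁻ q in cellS p, (‖W q.1 q.2 - sampKernel W n q.1 q.2‖₊ : ℝ≥0∞) ^ (2:ℝ))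
        ≤ ENNReal.ofReal V := by
    intro p hp1 hp2
    have hsub1 : Set.Ico (av p.1) (av p.1 + h) ⊆ Set.Icc 0 1 := by
      intro u hu
      constructor
      · have : (0:ℝ) ≤ av p.1 := by rw [havdef]; positivity
        linarith [hu.1]
      · have : av p.1 + h ≤ 1 := by
          rw [havh]
          rw [div_le_one hn']
          have : (p.1:ℝ) + 1 ≤ n := by exact_mod_cast hp1
          linarith
        linarith [hu.2]
    have hsub2 : Set.Ico (av p.2) (av p.2 + h) ⊆ Set.Icc 0 1 := by
      intro u hu
      constructor
      · have : (0:ℝ) ≤ av p.2 := by rw [havdef]; positivity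
        linarith [hu.1]
      · have : av p.2 + h ≤ 1 := by
          rw [havh]
          rw [div_le_one hn']
          have : (p.2:ℝ) + 1 ≤ n := by exact_mod_cast hp2
          linarith
        linarith [hu.2]
    -- pointwise bound on the cell
    have pointwise : ∀ q ∈ cellS p,
        (‖W q.1 q.2 - sampKernel W n q.1 q.2‖₊ : ℝ≥0∞) ^ (2:ℝ)
          ≤ ENNReal.ofReal (A₁^2 * ((q.1 - av p.1) + (q.2 - av p.2)) ^ β) := by
      intro q hq
      obtain ⟨hq1, hq2⟩ : q.1 ∈ Set.Ico (av p.1) (av p.1 + h) ∧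
          q.2 ∈ Set.Ico (av p.2) (av p.2 + h) := hq
      have hX : 0 ≤ (q.1 - av p.1) + (q.2 - av p.2) := by
        have := hq1.1; have := hq2.1; linarith
      have hHold := hWHolder (av p.1) (hsub1 ⟨le_refl _, lt_add_of_pos_right _ hh⟩)
        q.1 (hsub1 hq1) (av p.2) (hsub2 ⟨le_refl _, lt_add_of_pos_right _ hh⟩) q.2 (hsub2 hq2)
      rw [abs_of_nonneg (by linarith [hq1.1] : (0:ℝ) ≤ q.1 - av p.1),
        abs_of_nonneg (by linarith [hq2.1] : (0:ℝ) ≤ q.2 - av p.2)] at hHold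
      have hsamp : sampKernel W n q.1 q.2 = W (av p.1) (av p.2) := by
        rw [sampKernel, hstep p.1 q.1 hq1, hstep p.2 q.2 hq2]
      rw [hsamp]
      rw [← enorm_eq_nnnorm, Real.enorm_eq_ofReal_abs,
        ENNReal.ofReal_rpow_of_nonneg (abs_nonneg _) (by norm_num)]
      apply ENNReal.ofReal_le_ofReal
      calc |W q.1 q.2 - W (av p.1) (av p.2)| ^ (2:ℝ)
          ≤ (A₁ * ((q.1 - av p.1) + (q.2 - av p.2)) ^ α) ^ (2:ℝ) :=
            Real.rpow_le_rpow (abs_nonneg _) hHold (by norm_num)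
        _ = A₁ ^ (2:ℝ) * (((q.1 - av p.1) + (q.2 - av p.2)) ^ α) ^ (2:ℝ) :=
            Real.mul_rpow hA₁ (Real.rpow_nonneg hX _)
        _ = A₁ ^ 2 * ((q.1 - av p.1) + (q.2 - av p.2)) ^ β := by
            rw [← Real.rpow_natCast A₁ 2, ← Real.rpow_mul hX]
            norm_num [hβdef, mul_comm]
    have hmeasset : MeasurableSet (cellS p) := measurableSet_Ico.prod measurableSet_Ico
    have hcont : Continuous fun q : ℝ × ℝ => A₁^2 * ((q.1 - av p.1) + (q.2 - av p.2)) ^ β :=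
      continuous_const.mul ((Real.continuous_rpow_const hβ.le).comp (by fun_prop))
    have hint : IntegrableOn (fun q : ℝ × ℝ => A₁^2 * ((q.1 - av p.1) + (q.2 - av p.2)) ^ β)
        (cellS p) volume :=
      (hcont.continuousOn.integrableOn_compact (isCompact_Icc.prod isCompact_Icc)).mono_set
        (Set.prod_mono hsub1 hsub2)
    have hnn : 0 ≤ᵐ[volume.restrict (cellS p)]
        fun q : ℝ × ℝ => A₁^2 * ((q.1 - av p.1) + (q.2 - av p.2)) ^ β := by
      rw [EventuallyLE, ae_restrict_iff' hmeasset]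
      refine ae_of_all _ fun q hq => ?_
      have hX : 0 ≤ (q.1 - av p.1) + (q.2 - av p.2) := by
        have := hq.1.1; have := hq.2.1; linarith
      exact mul_nonneg (sq_nonneg _) (Real.rpow_nonneg hX _)
    calc (∫⁻ q in cellS p, (‖W q.1 q.2 - sampKernel W n q.1 q.2‖₊ : ℝ≥0∞) ^ (2:ℝ))
        ≤ ∫⁻ q in cellS p,
            ENNReal.ofReal (A₁^2 * ((q.1 - av p.1) + (q.2 - av p.2)) ^ β) :=
          setLIntegral_mono (ENNReal.continuous_ofReal.comp hcont).measurable pointwise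
      _ = ENNReal.ofReal (∫ q in cellS p, A₁^2 * ((q.1 - av p.1) + (q.2 - av p.2)) ^ β) :=
          (ofReal_integral_eq_lintegral_ofReal hint hnn).symm
      _ = ENNReal.ofReal V := by
          rw [hcelldef, MeasureTheory.integral_const_mul,
            cell_integral β h hβ hh.le (av p.1) (av p.2), hVdef]
  -- disjointness of cells
  have keyle : ∀ j j' : ℕ, j < j' → av j + h ≤ av j' := by
    intro j j' hjj
    rw [havh, havdef]
    have hc : ((j:ℝ)+1) ≤ (j':ℝ) := by exact_mod_cast hjj
    rw [div_le_div_iff₀ hn' hn']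
    nlinarith
  have hdisjIco : ∀ i i' : ℕ, i ≠ i' →
      Disjoint (Set.Ico (av i) (av i + h)) (Set.Ico (av i') (av i' + h)) := by
    intro i i' hne
    rw [Set.disjoint_left]; intro x hx hx'
    rcases hne.lt_or_gt with hlt | hlt
    · exact absurd hx'.1 (not_le.mpr (lt_of_lt_of_le hx.2 (keyle _ _ hlt)))
    · exact absurd hx.1 (not_le.mpr (lt_of_lt_of_le hx'.2 (keyle _ _ hlt)))
  have hdisj : (↑(Finset.range n ×ˢ Finset.range n) : Set (ℕ×ℕ)).PairwiseDisjoint cellS := by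
    intro p hp q hq hpq
    rw [Function.onFun, Set.disjoint_left]
    intro z hz hz'
    by_cases h1 : p.1 = q.1
    · have h2 : p.2 ≠ q.2 := fun h2 => hpq (Prod.ext h1 h2)
      exact Set.disjoint_left.mp (hdisjIco _ _ h2) hz.2 hz'.2
    · exact Set.disjoint_left.mp (hdisjIco _ _ h1) hz.1 hz'.1
  -- cover
  have mem1 : ∀ w : ℝ, w ∈ Set.Ico (0:ℝ) 1 →
      ∃ i : ℕ, i < n ∧ w ∈ Set.Ico (av i) (av i + h) := by
    intro w hw
    have hw0 : (0:ℝ) ≤ (n:ℝ) * w := mul_nonneg hn'.le hw.1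
    have hfl0 : (0:ℤ) ≤ ⌊(n:ℝ)*w⌋ := Int.floor_nonneg.mpr hw0
    have hcast : ((⌊(n:ℝ)*w⌋).toNat : ℝ) = ((⌊(n:ℝ)*w⌋ : ℤ) : ℝ) := by
      exact_mod_cast Int.toNat_of_nonneg hfl0
    refine ⟨(⌊(n:ℝ)*w⌋).toNat, ?_, ?_, ?_⟩
    · have hlt : ⌊(n:ℝ)*w⌋ < (n:ℤ) := Int.floor_lt.mpr (by push_cast; nlinarith [hw.2])
      omega
    · rw [havdef]
      rw [div_le_iff₀ hn', hcast, mul_comm]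
      exact Int.floor_le _
    · rw [havh, lt_div_iff₀ hn', hcast, mul_comm]
      exact Int.lt_floor_add_one _
  have hcover : Set.Ico (0:ℝ) 1 ×ˢ Set.Ico (0:ℝ) 1 ⊆
      ⋃ p ∈ (Finset.range n ×ˢ Finset.range n : Finset (ℕ×ℕ)), cellS p := by
    rintro ⟨u, v⟩ ⟨hu, hv⟩
    obtain ⟨i, hi, hui⟩ := mem1 u hu
    obtain ⟨j, hj, hvj⟩ := mem1 v hv
    simp only [Set.mem_iUnion]
    exact ⟨(i,j), by simp [Finset.mem_product, hi, hj], ⟨hui, hvj⟩⟩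
  -- measure rewrite
  have hμ : μI2 = (volume : Measure (ℝ×ℝ)).restrict (Set.Ico (0:ℝ) 1 ×ˢ Set.Ico (0:ℝ) 1) := by
    rw [μI2, Measure.volume_eq_prod, ← Measure.prod_restrict,
      ← Measure.restrict_congr_set Ico_ae_eq_Icc, Measure.prod_restrict, ← Measure.volume_eq_prod]
  -- the algebraic identity
  have halg : ((n*n : ℕ) : ℝ) * V = RHS := by
    have hpow : h^(β+2) = (n:ℝ)^(-(β+2)) := by
      rw [hhdef, one_div, Real.inv_rpow hn'.le, ← Real.rpow_neg hn'.le]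
    have hnn2 : ((n*n : ℕ):ℝ) * (n:ℝ)^(-(β+2)) = (n:ℝ)^(-β) := by
      push_cast
      rw [show ((n:ℝ)*(n:ℝ)) = (n:ℝ)^((2:ℕ):ℝ) by rw [Real.rpow_natCast]; ring]
      rw [← Real.rpow_add hn', show ((2:ℕ):ℝ) + -(β+2) = -β by push_cast; ring]
    rw [hVdef, hRHSdef, hβdef] at *
    rw [hpow]
    calc ((n*n : ℕ):ℝ) * (A₁ ^ 2 * ((n:ℝ)^(-(2*α+2)) * (2 ^ (2*α + 2) - 2) / ((2*α + 1) * (2*α + 2))))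
        = (((n*n : ℕ):ℝ) * (n:ℝ)^(-(2*α+2))) * (A₁ ^ 2 * ((2 ^ (2*α + 2) - 2) / ((2*α + 1) * (2*α + 2)))) := by ring
      _ = A₁ ^ 2 * ((2 ^ (2 * α + 2) - 2) / ((2 * α + 1) * (2 * α + 2))) * (n:ℝ) ^ (-(2 * α)) := by
          rw [hnn2]; ring
  -- the key lintegral bound
  have key : (∫⁻ q in Set.Ico (0:ℝ) 1 ×ˢ Set.Ico (0:ℝ) 1,
      (‖W q.1 q.2 - sampKernel W n q.1 q.2‖₊ : ℝ≥0∞) ^ (2:ℝ))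
        ≤ ENNReal.ofReal RHS := by
    calc (∫⁻ q in Set.Ico (0:ℝ) 1 ×ˢ Set.Ico (0:ℝ) 1,
        (‖W q.1 q.2 - sampKernel W n q.1 q.2‖₊ : ℝ≥0∞) ^ (2:ℝ))
        ≤ ∫⁻ q in ⋃ p ∈ (Finset.range n ×ˢ Finset.range n : Finset (ℕ×ℕ)), cellS p,
            (‖W q.1 q.2 - sampKernel W n q.1 q.2‖₊ : ℝ≥0∞) ^ (2:ℝ) :=
          lintegral_mono_set hcover
      _ = ∑ p ∈ (Finset.range n ×ˢ Finset.range n : Finset (ℕ×ℕ)),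
            ∫⁻ q in cellS p, (‖W q.1 q.2 - sampKernel W n q.1 q.2‖₊ : ℝ≥0∞) ^ (2:ℝ) :=
          lintegral_biUnion_finset hdisj
            (fun p _ => measurableSet_Ico.prod measurableSet_Ico) _
      _ ≤ ∑ p ∈ (Finset.range n ×ˢ Finset.range n : Finset (ℕ×ℕ)), ENNReal.ofReal V := by
          refine Finset.sum_le_sum fun p hp => ?_
          rw [Finset.mem_product, Finset.mem_range, Finset.mem_range] at hp
          exact cellbound p hp.1 hp.2
      _ = (n*n) • ENNReal.ofReal V := by
          rw [Finset.sum_const, Finset.card_product, Finset.card_range]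
      _ = ENNReal.ofReal RHS := by
          rw [nsmul_eq_mul, ← ENNReal.ofReal_natCast (n*n),
            ← ENNReal.ofReal_mul (by positivity), halg]
  -- final assembly
  rw [eLpNorm_eq_lintegral_rpow_enorm_toReal (by norm_num) (by norm_num), hμ]
  simp only [ENNReal.toReal_ofNat]
  have h1 : (∫⁻ q in Set.Ico (0:ℝ) 1 ×ˢ Set.Ico (0:ℝ) 1,
      (‖W q.1 q.2 - sampKernel W n q.1 q.2‖₊ : ℝ≥0∞) ^ (2:ℝ)) ^ ((1:ℝ)/2)
        ≤ ENNReal.ofReal (RHS ^ ((1:ℝ)/2)) := by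
    rw [← ENNReal.ofReal_rpow_of_nonneg hRHS (by norm_num)]
    exact ENNReal.rpow_le_rpow key (by norm_num)
  have h2 : ((∫⁻ q in Set.Ico (0:ℝ) 1 ×ˢ Set.Ico (0:ℝ) 1,
      (‖W q.1 q.2 - sampKernel W n q.1 q.2‖₊ : ℝ≥0∞) ^ (2:ℝ)) ^ ((1:ℝ)/2)).toReal
        ≤ RHS ^ ((1:ℝ)/2) := by
    calc _ ≤ (ENNReal.ofReal (RHS ^ ((1:ℝ)/2))).toReal :=
          ENNReal.toReal_mono ENNReal.ofReal_ne_top h1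
      _ = RHS ^ ((1:ℝ)/2) := ENNReal.toReal_ofReal (Real.rpow_nonneg hRHS _)
  calc _ ≤ (RHS ^ ((1:ℝ)/2)) ^ 2 := pow_le_pow_left₀ ENNReal.toReal_nonneg h2 2
    _ = RHS := by
      rw [← Real.rpow_natCast (RHS ^ ((1:ℝ)/2)) 2, ← Real.rpow_mul hRHS]
      norm_num
end

section
/- Let W : I² → {0,1} be measurable with support W⁺ := {(u,v) ∈ I² : W(u,v) = 1}, and for n ∈ ℕ let Wₙ be the cell-intersection step kernel, i.e., Wₙ = 1 on I_i × I_j if (I_i × I_j) ∩ W⁺ ≠ ∅ and Wₙ = 0 on I_i × I_j otherwise. Then ‖W − Wₙ‖²_{L²(I²)} ≤ N_{1/n}(∂W⁺) / n², where N_{1/n}(∂W⁺) is the number of closed (1/n)-mesh squares [i/n,(i+1)/n]×[j/n,(j+1)/n] (i,j ∈ ℤ) that intersect the topological boundary ∂W⁺ of W⁺ in ℝ². -/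
open MeasureTheory Filter Set
open scoped ENNReal NNReal

theorem aux_inter_frontier {α : Type*} [TopologicalSpace α] {s t : Set α}
    (hs : IsPreconnected s) (h1 : (s ∩ t).Nonempty) (h2 : (s \ t).Nonempty) :
    (s ∩ frontier t).Nonempty := by
  by_contra hempty
  rw [Set.not_nonempty_iff_eq_empty] at hempty
  have hdis : ∀ x ∈ s, x ∉ frontier t := by
    intro x hx hxf
    exact absurd hempty (Set.nonempty_iff_ne_empty.mp ⟨x, hx, hxf⟩)
  have hsub : s ⊆ interior t ∪ (closure t)ᶜ := by
    intro x hx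
    by_cases hc : x ∈ closure t
    · left; by_contra hi; exact hdis x hx ⟨hc, hi⟩
    · right; exact hc
  obtain ⟨a, ha, hat⟩ := h1
  obtain ⟨b, hb, hbt⟩ := h2
  have haU : a ∈ interior t := by
    by_contra hi; exact hdis a ha ⟨subset_closure hat, hi⟩
  have hbV : b ∈ (closure t)ᶜ := by
    by_contra hc
    rw [Set.notMem_compl_iff] at hc
    exact hdis b hb ⟨hc, fun hi => hbt (interior_subset hi)⟩
  obtain ⟨x, _, hx⟩ := hs _ _ isOpen_interior isClosed_closure.isOpen_compl hsub
    ⟨a, ha, haU⟩ ⟨b, hb, hbV⟩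
  exact hx.2 (subset_closure (interior_subset hx.1))

/-- `u` belongs to its own cell. -/
theorem aux_mem_cell {n : ℕ} (hn : 0 < n) (u : ℝ) : u ∈ cell n u := by
  have hn' : (0:ℝ) < n := by exact_mod_cast hn
  constructor
  · rw [stepPt, div_le_iff₀ hn', mul_comm]
    exact Int.floor_le _
  · rw [stepPt, ← add_div, lt_div_iff₀ hn', mul_comm]
    exact Int.lt_floor_add_one _

theorem aux_cell_subset {n : ℕ} (hn : 0 < n) (u : ℝ) :
    cell n u ⊆ Set.Icc ((⌊(n:ℝ) * u⌋ : ℝ) * (1/n)) (((⌊(n:ℝ) * u⌋ : ℝ) + 1) * (1/n)) := by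
  have hn' : (0:ℝ) < n := by exact_mod_cast hn
  have e1 : ((⌊(n:ℝ) * u⌋ : ℝ)) * (1/n) = stepPt n u := by rw [stepPt]; ring
  have e2 : ((⌊(n:ℝ) * u⌋ : ℝ) + 1) * (1/n) = stepPt n u + 1/n := by rw [stepPt]; ring
  rw [e1, e2]
  exact Set.Ico_subset_Icc_self

set_option maxHeartbeats 1000000 in
/-- **L² error of the cell-intersection step kernel.**
For a measurable `{0,1}`-valued graphon `W` with support `W⁺`,
`‖W − Wₙ‖²_{L²(I²)} ≤ N_{1/n}(∂W⁺) / n²`, where `N_{1/n}(∂W⁺)` counts the closed `(1/n)`-mesh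
squares meeting the topological boundary of `W⁺`. -/
theorem interKernel_L2_error
    (W : ℝ → ℝ → ℝ) (hWm : Measurable (Function.uncurry W))
    (hWbin : ∀ u v, W u v = 0 ∨ W u v = 1)
    (n : ℕ) (hn : 0 < n) :
    ((eLpNorm (fun q : ℝ × ℝ => W q.1 q.2 - interKernel W n q.1 q.2) 2 μI2).toReal) ^ 2
      ≤ (meshCount (1 / n) (frontier (supportSet W)) : ℝ) / (n : ℝ) ^ 2 := by
  classical
  have hn' : (0:ℝ) < n := by exact_mod_cast hn
  set Ω : Set (ℝ × ℝ) := frontier (supportSet W) with hΩ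
  set S : Set (ℤ × ℤ) := {p : ℤ × ℤ |
    ((Set.Icc ((p.1 : ℝ) * (1/(n:ℝ))) (((p.1 : ℝ) + 1) * (1/(n:ℝ))) ×ˢ
      Set.Icc ((p.2 : ℝ) * (1/(n:ℝ))) (((p.2 : ℝ) + 1) * (1/(n:ℝ)))) ∩ Ω).Nonempty} with hSdef
  have hmesh : meshCount (1 / n) Ω = S.ncard := rfl
  -- Ω is contained in the unit square
  have hΩsub : Ω ⊆ (Set.Icc (0:ℝ) 1) ×ˢ (Set.Icc (0:ℝ) 1) := by
    refine frontier_subset_closure.trans (closure_minimal ?_ (isClosed_Icc.prod isClosed_Icc))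
    rintro ⟨u, v⟩ ⟨h1, h2, _⟩
    exact ⟨h1, h2⟩
  -- S is finite
  have hSfin : S.Finite := by
    apply Set.Finite.subset ((Set.finite_Icc (-1 : ℤ) n).prod (Set.finite_Icc (-1 : ℤ) n))
    rintro ⟨i, j⟩ ⟨z, hz1, hz2⟩
    obtain ⟨⟨hz11, hz12⟩, hz21, hz22⟩ := hz1
    obtain ⟨⟨hu0, hu1⟩, hv0, hv1⟩ := hΩsub hz2
    have key : ∀ k : ℤ, (k:ℝ) * (1/(n:ℝ)) ≤ 1 → ((k:ℝ)+1) * (1/(n:ℝ)) ≥ 0 → k ∈ Set.Icc (-1:ℤ) n := by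
      intro k h1 h2
      have hinv : (0:ℝ) < 1/n := by positivity
      have hid : (n:ℝ) * (1/n) = 1 := by field_simp
      constructor
      · have hk : (0:ℝ) ≤ (k:ℝ) + 1 := by
          by_contra hneg
          push_neg at hneg
          nlinarith [h2, hinv]
        have : (-1:ℝ) ≤ k := by linarith
        exact_mod_cast this
      · have : (k:ℝ) ≤ n := by
          by_contra hneg
          push_neg at hneg
          nlinarith [h1, hinv, hid]
        exact_mod_cast this
    constructor
    · exact key i (le_trans hz11 hu1) (le_trans hu0 hz12)
    · exact key j (le_trans hz21 hv1) (le_trans hv0 hz22)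
  -- the exceptional set
  set sq : ℤ × ℤ → Set (ℝ × ℝ) := fun p =>
    (Set.Ico ((p.1:ℝ)/n) ((p.1:ℝ)/n + 1/n)) ×ˢ (Set.Ico ((p.2:ℝ)/n) ((p.2:ℝ)/n + 1/n)) with hsq
  set E : Set (ℝ × ℝ) := ⋃ p ∈ S, sq p with hE
  have hEmeas : MeasurableSet E :=
    MeasurableSet.biUnion S.to_countable
      (fun p _ => (measurableSet_Ico.prod measurableSet_Ico))
  -- pointwise bound on the unit square
  have hpt : ∀ q : ℝ × ℝ, q ∈ (Set.Icc (0:ℝ) 1) ×ˢ (Set.Icc (0:ℝ) 1) →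
      ‖W q.1 q.2 - interKernel W n q.1 q.2‖ ≤ ‖E.indicator (fun _ => (1:ℝ)) q‖ := by
    rintro ⟨u, v⟩ ⟨hu, hv⟩
    by_cases hq : W u v - interKernel W n u v = 0
    · simp only [hq, norm_zero]; exact norm_nonneg _
    · have hqE : (u, v) ∈ E := by
        have hWval : W u v = 0 := by
          rcases hWbin u v with h0 | h1
          · exact h0
          · exfalso
            apply hq
            have hne : ((cell n u ×ˢ cell n v) ∩ supportSet W).Nonempty :=
              ⟨(u, v), ⟨aux_mem_cell hn u, aux_mem_cell hn v⟩, ⟨hu, hv, h1⟩⟩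
            rw [interKernel, if_pos hne, h1, sub_self]
        have hne : ((cell n u ×ˢ cell n v) ∩ supportSet W).Nonempty := by
          by_contra hc
          apply hq
          rw [interKernel, if_neg hc, hWval, sub_self]
        -- the cell is preconnected and meets both supportSet and its complement
        have hconn : IsPreconnected (cell n u ×ˢ cell n v) :=
          ((convex_Ico _ _).prod (convex_Ico _ _)).isPreconnected
        have hdiff : ((cell n u ×ˢ cell n v) \ supportSet W).Nonempty := by
          refine ⟨(u, v), ⟨aux_mem_cell hn u, aux_mem_cell hn v⟩, ?_⟩
          rintro ⟨-, -, h1⟩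
          rw [hWval] at h1; norm_num at h1
        obtain ⟨z, hz1, hz2⟩ := aux_inter_frontier hconn hne hdiff
        have hpS : (⌊(n:ℝ) * u⌋, ⌊(n:ℝ) * v⌋) ∈ S := by
          exact ⟨z, ⟨aux_cell_subset hn u hz1.1, aux_cell_subset hn v hz1.2⟩, hz2⟩
        apply Set.mem_biUnion hpS
        exact ⟨aux_mem_cell hn u, aux_mem_cell hn v⟩
      rw [Set.indicator_of_mem hqE]
      have h1 : ∀ x : ℝ, x = 0 ∨ x = 1 → ∀ y : ℝ, y = 0 ∨ y = 1 → ‖x - y‖ ≤ ‖(1:ℝ)‖ := by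
        rintro x (rfl | rfl) y (rfl | rfl) <;> norm_num
      refine h1 _ (hWbin u v) _ ?_
      rw [interKernel]
      split <;> simp
  -- eLpNorm bound
  have hmain : eLpNorm (fun q : ℝ × ℝ => W q.1 q.2 - interKernel W n q.1 q.2) 2 μI2
      ≤ (μI2 E) ^ ((1:ℝ)/2) := by
    have h1 : eLpNorm (fun q : ℝ × ℝ => W q.1 q.2 - interKernel W n q.1 q.2) 2 μI2
        ≤ eLpNorm (E.indicator (fun _ => (1:ℝ))) 2 μI2 := by
      apply eLpNorm_mono_ae
      rw [μI2, ae_restrict_iff' (measurableSet_Icc.prod measurableSet_Icc)]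
      exact ae_of_all _ hpt
    have h2 : eLpNorm (E.indicator (fun _ => (1:ℝ))) 2 μI2
        = (μI2 E) ^ ((1:ℝ)/2) := by
      rw [eLpNorm_indicator_const hEmeas (by norm_num) (by norm_num)]
      simp [ENNReal.toReal_ofNat]
    exact h2 ▸ h1
  -- bound the measure of E
  set c : ℝ≥0∞ := (hSfin.toFinset.card : ℝ≥0∞) * (ENNReal.ofReal (1/n) * ENNReal.ofReal (1/n))
    with hc
  have hμE : μI2 E ≤ c := by
    have hE' : E = ⋃ p ∈ hSfin.toFinset, sq p := by
      simp [hE, Set.Finite.mem_toFinset]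
    calc μI2 E ≤ volume E := Measure.restrict_apply_le _ _
      _ ≤ ∑ p ∈ hSfin.toFinset, volume (sq p) := by
          rw [hE']; exact measure_biUnion_finset_le _ _
      _ = c := by
          have hvol : ∀ p : ℤ × ℤ, volume (sq p)
              = ENNReal.ofReal (1/n) * ENNReal.ofReal (1/n) := by
            intro p
            rw [hsq]
            simp only [Measure.volume_eq_prod, Measure.prod_prod, Real.volume_Ico]
            norm_num
          simp only [hvol, Finset.sum_const, nsmul_eq_mul, hc]
  have hcne : c ≠ ⊤ := by
    rw [hc]
    exact ENNReal.mul_ne_top (ENNReal.natCast_ne_top _)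
      (ENNReal.mul_ne_top ENNReal.ofReal_ne_top ENNReal.ofReal_ne_top)
  have hbound : eLpNorm (fun q : ℝ × ℝ => W q.1 q.2 - interKernel W n q.1 q.2) 2 μI2
      ≤ c ^ ((1:ℝ)/2) :=
    hmain.trans (ENNReal.rpow_le_rpow hμE (by norm_num))
  have hfin2 : c ^ ((1:ℝ)/2) ≠ ⊤ :=
    (ENNReal.rpow_lt_top_of_nonneg (by norm_num) hcne).ne
  have htr : ((eLpNorm (fun q : ℝ × ℝ => W q.1 q.2 - interKernel W n q.1 q.2) 2 μI2).toReal)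
      ≤ (c ^ ((1:ℝ)/2)).toReal := ENNReal.toReal_mono hfin2 hbound
  have hsq2 : ((c ^ ((1:ℝ)/2)).toReal) ^ 2 = c.toReal := by
    rw [← ENNReal.toReal_rpow, ← Real.rpow_natCast (c.toReal ^ ((1:ℝ)/2)) 2,
      ← Real.rpow_mul ENNReal.toReal_nonneg]
    norm_num
  have hfinal : ((eLpNorm (fun q : ℝ × ℝ => W q.1 q.2 - interKernel W n q.1 q.2) 2 μI2).toReal) ^ 2
      ≤ c.toReal := by
    rw [← hsq2]
    exact pow_le_pow_left₀ ENNReal.toReal_nonneg htr 2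
  refine hfinal.trans ?_
  rw [hc]
  rw [ENNReal.toReal_mul, ENNReal.toReal_mul, ENNReal.toReal_ofReal (by positivity),
    ENNReal.toReal_natCast]
  rw [hmesh, Set.ncard_eq_toFinset_card _ hSfin]
  apply le_of_eq
  field_simp
end
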